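/- Let S ⊆ {1,…,n−1} be nonempty, written S = {i_1 < i_2 < ⋯ < i_k}, and set i_0 := 0. For 1 ≤ j ≤ k−1, the image of the canonical map (∧^{n−i_{j+1}}F_{i_{j+1}}) ⊗ (∧^{i_{j+1}−i_j−1}F_{i_j}) ⊗ F_{i_{j−1}} → ∧^{n−i_j}D (given by wedging) has dimension 1 + (i_j − i_{j−1})(i_{j+1} − i_j). -/

import Mathlib

open ExteriorAlgebra
open Pointwise

namespace Statement17Aux

variable (E : Type*) [Field E] {D : Type*} [AddCommGroup D] [Module E D]

noncomputable def pl (l : List D) : ExteriorAlgebra E D := (l.map (ι E)).prod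

@[simp] lemma pl_nil : pl E ([] : List D) = 1 := rfl

@[simp] lemma pl_cons (x : D) (l : List D) : pl E (x :: l) = ι E x * pl E l := by
  simp [pl]

lemma pl_append (l₁ l₂ : List D) : pl E (l₁ ++ l₂) = pl E l₁ * pl E l₂ := by
  simp [pl]

lemma pl_perm {l l' : List D} (h : l.Perm l') : pl E l = pl E l' ∨ pl E l = - pl E l' := by
  induction h with
  | nil => exact Or.inl rfl
  | cons x h ih =>
      rcases ih with h' | h'
      · exact Or.inl (by simp [h'])
      · exact Or.inr (by simp [h', mul_neg])
  | swap x y l =>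
      refine Or.inr ?_
      have hs : ι E y * ι E x = - (ι E x * ι E y) :=
        eq_neg_of_add_eq_zero_left (ι_add_mul_swap y x)
      simp only [pl_cons, ← mul_assoc, hs, neg_mul]
  | trans h₁ h₂ ih₁ ih₂ =>
      rcases ih₁ with h' | h' <;> rcases ih₂ with h'' | h'' <;>
        simp [h', h'', Or.inl, Or.inr]

lemma pl_eq_zero {l : List D} (h : ¬ l.Nodup) : pl E l = 0 := by
  classical
  induction l with
  | nil => simp at h
  | cons x t ih =>
      by_cases hx : x ∈ t
      · have hp : t.Perm (x :: t.erase x) := List.perm_cons_erase hx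
        rcases pl_perm E hp with h' | h' <;>
        · rw [pl_cons, h']
          simp [← mul_assoc, ι_sq_zero]
      · have : ¬ t.Nodup := fun hn => h (List.nodup_cons.2 ⟨hx, hn⟩)
        rw [pl_cons, ih this, mul_zero]

variable {α : Type*} [LinearOrder α] [DecidableEq α]

/-- sorted wedge of a finset of indices -/
noncomputable def ws (e : α → D) (S : Finset α) : ExteriorAlgebra E D :=
  pl E ((S.sort (· ≤ ·)).map e)

lemma sort_perm_of_nodup {l : List α} (h : l.Nodup) :
    (l.toFinset.sort (· ≤ ·)).Perm l := by
  apply List.perm_of_nodup_nodup_toFinset_eq (Finset.sort_nodup _ _) h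
  rw [Finset.sort_toFinset]

lemma ws_toFinset_mem (e : α → D) {M : Submodule E (ExteriorAlgebra E D)} {l : List α}
    (hl : l.Nodup) (hm : pl E (l.map e) ∈ M) : ws E e l.toFinset ∈ M := by
  rcases pl_perm E ((sort_perm_of_nodup hl).map e) with h' | h'
  · rw [ws, h']; exact hm
  · rw [ws, h']; exact M.neg_mem hm

lemma pl_mem_of_ws_mem (e : α → D) {M : Submodule E (ExteriorAlgebra E D)} {l : List α}
    (hl : l.Nodup) (hm : ws E e l.toFinset ∈ M) : pl E (l.map e) ∈ M := by
  rcases pl_perm E ((sort_perm_of_nodup hl).map e) with h' | h'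
  · rw [ws] at hm; rw [← h']; exact hm
  · rw [ws] at hm
    have : pl E (l.map e) = - pl E ((l.toFinset.sort (· ≤ ·)).map e) := by
      rw [h']; simp
    rw [this]
    exact M.neg_mem hm

lemma pl_mem_pow (e : α → D) (M : Submodule E D) (l : List α) (h : ∀ i ∈ l, e i ∈ M) :
    pl E (l.map e) ∈ (Submodule.map (ι E) M) ^ l.length := by
  induction l with
  | nil =>
      rw [List.map_nil, pl_nil, List.length_nil, pow_zero]
      exact Submodule.one_le.mp le_rfl
  | cons x t ih =>
      rw [List.map_cons, pl_cons, List.length_cons, pow_succ']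
      exact Submodule.mul_mem_mul ⟨e x, h x List.mem_cons_self, rfl⟩
        (ih fun i hi => h i (List.mem_cons_of_mem x hi))

lemma mem_set_pow_image (e : α → D) (S : Set α) {m : ℕ} {x : ExteriorAlgebra E D}
    (hx : x ∈ ((fun i => ι E (e i)) '' S) ^ m) :
    ∃ l : List α, l.length = m ∧ (∀ i ∈ l, i ∈ S) ∧ pl E (l.map e) = x := by
  rw [Set.mem_pow] at hx
  obtain ⟨f, hf⟩ := hx
  have hmem : ∀ p : Fin m, ∃ i, i ∈ S ∧ ι E (e i) = (f p : ExteriorAlgebra E D) := by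
    intro p
    exact (Set.mem_image _ _ _).mp (f p).2
  choose g hg1 hg2 using hmem
  refine ⟨List.ofFn g, by simp, ?_, ?_⟩
  · intro i hi
    rw [List.mem_ofFn] at hi
    obtain ⟨p, rfl⟩ := hi
    exact hg1 p
  · rw [pl, List.map_ofFn, List.map_ofFn, ← hf]
    have he : (⇑(ι E) ∘ e ∘ g) = fun p => ((f p : ExteriorAlgebra E D)) :=
      funext fun p => hg2 p
    rw [he]


lemma sort_eq_ofFn {m : ℕ} (S : Finset α) (h : S.card = m) :
    S.sort (· ≤ ·) = List.ofFn (fun i : Fin m => S.orderEmbOfFin h i) := by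
  apply List.ext_getElem
  · simp [h]
  · intro i h1 h2
    simp only [List.getElem_ofFn]
    rw [Finset.orderEmbOfFin_apply]
    rfl

lemma ws_eq_iMulti {m : ℕ} (e : α → D) (S : Finset α) (h : S.card = m) :
    ws E e S = ιMulti E m (fun i => e (S.orderEmbOfFin h i)) := by
  rw [ws, sort_eq_ofFn (h := h), ιMulti_apply, pl, List.map_ofFn, List.map_ofFn]
  rfl

theorem ws_linearIndependent {n : ℕ} (b : Module.Basis (Fin n) E D) (m : ℕ) :
    LinearIndependent E (fun S : {S : Finset (Fin n) // S.card = m} => ws E (b ·) S.1) := by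
  classical
  rw [Fintype.linearIndependent_iff]
  intro g hg S₀
  -- dual functional for S₀
  set σ := (S₀ : Finset (Fin n)).orderEmbOfFin S₀.2 with hσ
  set φ : D [⋀^Fin m]→ₗ[E] E :=
    (Matrix.detRowAlternating (n := Fin m) (R := E)).compLinearMap
      (LinearMap.pi fun q => b.coord (σ q)) with hφ
  set L := liftAlternating (R := E) (M := D) (N := E)
      (Function.update (0 : ∀ i, D [⋀^Fin i]→ₗ[E] E) m φ) with hL
  have key : ∀ T : {S : Finset (Fin n) // S.card = m},
      L (ws E (b ·) T.1) = if T = S₀ then 1 else 0 := by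
    intro T
    set τ := (T : Finset (Fin n)).orderEmbOfFin T.2 with hτ
    rw [ws_eq_iMulti E (b ·) T.1 T.2, hL, liftAlternating_apply_ιMulti,
      Function.update_self]
    rw [hφ]
    simp only [AlternatingMap.compLinearMap_apply]
    by_cases hT : T = S₀
    · subst hT
      rw [if_pos rfl]
      have h1 : (fun p => (LinearMap.pi fun q => b.coord (σ q)) (b (τ p)))
          = (1 : Matrix (Fin m) (Fin m) E) := by
        funext p q
        simp only [LinearMap.pi_apply, Module.Basis.coord_apply,
          Module.Basis.repr_self_apply, Matrix.one_apply]
        have heq : τ p = σ q ↔ p = q := by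
          constructor
          · intro h; exact τ.injective (by rw [h, hτ, hσ])
          · intro h; rw [h, hτ, hσ]
        simp only [heq]
      show Matrix.detRowAlternating (fun p => (LinearMap.pi fun q => b.coord (σ q)) (b (τ p))) = 1
      rw [h1]
      exact Matrix.det_one
    · rw [if_neg hT]
      -- find a column that vanishes
      have hsub : ¬ (S₀ : Finset (Fin n)) ⊆ T.1 := by
        intro hss
        exact hT (Subtype.ext (Finset.eq_of_subset_of_card_le hss (by rw [T.2, S₀.2])).symm)
      obtain ⟨x, hxS, hxT⟩ := Finset.not_subset.1 hsub
      obtain ⟨q₀, hq₀⟩ : ∃ q₀, σ q₀ = x := by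
        have hr : x ∈ Set.range σ := by
          rw [hσ, Finset.range_orderEmbOfFin]; exact hxS
        exact hr
      apply Matrix.det_eq_zero_of_column_eq_zero q₀
      intro p
      simp only [Matrix.of_apply, LinearMap.pi_apply, Module.Basis.coord_apply,
        Module.Basis.repr_self_apply, hq₀]
      have hne : ¬ τ p = x := fun h => hxT (h ▸ Finset.orderEmbOfFin_mem _ _ _)
      rw [if_neg hne]
  have := congrArg L hg
  rw [map_sum, map_zero] at this
  simp only [map_smul, key, smul_eq_mul, mul_ite, mul_one, mul_zero,
    Finset.sum_ite_eq' Finset.univ, Finset.mem_univ, if_pos] at this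
  exact this


lemma exists_adapted_basis {n : ℕ} [FiniteDimensional E D] (hD : Module.finrank E D = n)
    (F : ℕ → Submodule E D) (hflag : ∀ j : ℕ, F (j + 1) ≤ F j)
    (hdim : ∀ j : ℕ, j ≤ n → Module.finrank E (F j) = n - j) :
    ∃ b : Module.Basis (Fin n) E D, ∀ j : ℕ, j ≤ n →
      F j = Submodule.span E ((fun i => b i) '' {i : Fin n | j ≤ i.val}) := by
  classical
  have hv : ∀ j : ℕ, j < n → ∃ x, x ∈ F j ∧ x ∉ F (j + 1) := by
    intro j hj
    have hlt : F (j + 1) < F j := by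
      refine lt_of_le_of_ne (hflag j) ?_
      intro h
      have h1 := hdim j (le_of_lt hj)
      have h2 := hdim (j + 1) hj
      rw [h] at h2
      omega
    obtain ⟨x, hx1, hx2⟩ := SetLike.exists_of_lt hlt
    exact ⟨x, hx1, hx2⟩
  set v : ℕ → D := fun j => if h : j < n then (hv j h).choose else 0 with hvdef
  have hv1 : ∀ j : ℕ, j < n → v j ∈ F j := by
    intro j hj; rw [hvdef]; simp only [dif_pos hj]; exact (hv j hj).choose_spec.1
  have hv2 : ∀ j : ℕ, j < n → v j ∉ F (j + 1) := by
    intro j hj; rw [hvdef]; simp only [dif_pos hj]; exact (hv j hj).choose_spec.2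
  have claim : ∀ m : ℕ, m ≤ n → F (n - m) = Submodule.span E (v '' Set.Ico (n - m) n) := by
    intro m
    induction m with
    | zero =>
        intro _
        simp only [Nat.sub_zero, Set.Ico_self, Set.image_empty, Submodule.span_empty]
        have : Module.finrank E (F n) = 0 := by simpa using hdim n le_rfl
        exact Submodule.finrank_eq_zero.mp this
    | succ m ih =>
        intro hm
        have hmn : m ≤ n := le_of_lt (Nat.lt_of_succ_le hm)
        set j := n - (m + 1) with hj
        have hjn : j < n := by omega
        have hjs : j + 1 = n - m := by omega
        have himg : v '' Set.Ico j n = insert (v j) (v '' Set.Ico (j + 1) n) := by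
          have hset : Set.Ico j n = insert j (Set.Ico (j + 1) n) := by
            ext t
            simp only [Set.mem_insert_iff, Set.mem_Ico]
            omega
          rw [hset, Set.image_insert_eq]
        have hspan : Submodule.span E (v '' Set.Ico j n)
            = Submodule.span E {v j} ⊔ F (j + 1) := by
          rw [himg, Set.insert_eq, Submodule.span_union, hjs, ih hmn]
        have hle : Submodule.span E {v j} ⊔ F (j + 1) ≤ F j := by
          refine sup_le ?_ (hflag j)
          rw [Submodule.span_singleton_le_iff_mem]
          exact hv1 j hjn
        have hlt : F (j + 1) < Submodule.span E {v j} ⊔ F (j + 1) := by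
          refine lt_of_le_of_ne le_sup_right ?_
          intro h
          apply hv2 j hjn
          rw [h]
          exact Submodule.mem_sup_left (Submodule.mem_span_singleton_self (v j))
        have hfr : Module.finrank E (F j) ≤
            Module.finrank E ↥(Submodule.span E {v j} ⊔ F (j + 1)) := by
          have h1 := Submodule.finrank_lt_finrank_of_lt hlt
          have h2 := hdim j (le_of_lt hjn)
          have h3 := hdim (j + 1) hjn
          omega
        rw [hspan]
        exact (Submodule.eq_of_le_of_finrank_le hle hfr).symm
  have htop : F 0 = ⊤ := by
    apply Submodule.eq_top_of_finrank_eq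
    rw [hdim 0 (Nat.zero_le n), Nat.sub_zero, hD]
  have hrange : Set.range (fun i : Fin n => v i.val) = v '' Set.Ico 0 n := by
    ext x
    constructor
    · rintro ⟨i, rfl⟩; exact ⟨i.val, ⟨Nat.zero_le _, i.isLt⟩, rfl⟩
    · rintro ⟨t, ⟨_, ht⟩, rfl⟩; exact ⟨⟨t, ht⟩, rfl⟩
  have hspan_top : ⊤ ≤ Submodule.span E (Set.range fun i : Fin n => v i.val) := by
    rw [hrange]
    have := claim n le_rfl
    rw [Nat.sub_self] at this
    rw [← this, htop]
  have hcard : Fintype.card (Fin n) = Module.finrank E D := by simp [hD]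
  refine ⟨basisOfTopLeSpanOfCardEqFinrank (fun i : Fin n => v i.val) hspan_top hcard, ?_⟩
  intro j hjn
  have hb : ⇑(basisOfTopLeSpanOfCardEqFinrank (fun i : Fin n => v i.val) hspan_top hcard)
      = fun i : Fin n => v i.val := coe_basisOfTopLeSpanOfCardEqFinrank _ _ _
  rw [hb]
  have : (fun i : Fin n => v i.val) '' {i : Fin n | j ≤ i.val} = v '' Set.Ico j n := by
    ext x
    constructor
    · rintro ⟨i, hi, rfl⟩; exact ⟨i.val, ⟨hi, i.isLt⟩, rfl⟩
    · rintro ⟨t, ⟨ht1, ht2⟩, rfl⟩; exact ⟨⟨t, ht2⟩, ht1, rfl⟩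
  rw [this]
  have := claim (n - j) (Nat.sub_le n j)
  rwa [Nat.sub_sub_self hjn] at this


end Statement17Aux

set_option maxHeartbeats 1000000 in
open Statement17Aux in
/-- Let `D = F_0 ⊋ F_1 ⊋ ⋯ ⊋ F_{n-1} ⊋ F_n = 0` be a complete flag on the
`n`-dimensional `E`-vector space `D` (so `dim F_j = n - j`).  Let
`S = {i_1 < i_2 < ⋯ < i_k} ⊆ {1, …, n-1}` be nonempty and set `i_0 := 0`.  For
`1 ≤ j ≤ k-1`, the image of the canonical map
`(⋀^{n-i_{j+1}} F_{i_{j+1}}) ⊗ (⋀^{i_{j+1}-i_j-1} F_{i_j}) ⊗ F_{i_{j-1}} → ⋀^{n-i_j} D`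
(given by wedging) has dimension `1 + (i_j - i_{j-1})(i_{j+1} - i_j)`.

The subset `S` is encoded by its strictly increasing enumeration `idx : ℕ → ℕ` with
`idx 0 = 0` and `idx t ∈ {1, …, n-1}` for `1 ≤ t ≤ k`; exterior powers of a subspace `F` are
realized inside the exterior algebra of `D` as powers of the submodule `ι(F)`, and the image
of the canonical map as a product of submodules. -/
theorem statement17 {E : Type*} [Field E] {D : Type*} [AddCommGroup D] [Module E D]
    {n : ℕ} [FiniteDimensional E D] (hD : Module.finrank E D = n)
    (F : ℕ → Submodule E D)
    (hflag : ∀ j : ℕ, F (j + 1) ≤ F j)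
    (hdim : ∀ j : ℕ, j ≤ n → Module.finrank E (F j) = n - j)
    (k : ℕ) (hk : 1 ≤ k) (idx : ℕ → ℕ)
    (h0 : idx 0 = 0)
    (hmono : ∀ t : ℕ, t < k → idx t < idx (t + 1))
    (hrange : ∀ t : ℕ, 1 ≤ t → t ≤ k → 1 ≤ idx t ∧ idx t ≤ n - 1)
    (j : ℕ) (hj1 : 1 ≤ j) (hjk : j ≤ k - 1) :
    Module.finrank E
      ↥((Submodule.map (ExteriorAlgebra.ι E) (F (idx (j + 1)))) ^ (n - idx (j + 1)) *
        (Submodule.map (ExteriorAlgebra.ι E) (F (idx j))) ^ (idx (j + 1) - idx j - 1) *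
        (Submodule.map (ExteriorAlgebra.ι E) (F (idx (j - 1))))) =
      1 + (idx j - idx (j - 1)) * (idx (j + 1) - idx j) := by
  classical
  set a0 := idx (j - 1) with ha0
  set b0 := idx j with hb0
  set c0 := idx (j + 1) with hc0
  have hab : a0 < b0 := by
    have h1 : j - 1 < k := by omega
    have h2 := hmono (j - 1) h1
    have h3 : j - 1 + 1 = j := by omega
    rw [h3] at h2
    exact h2
  have hbc : b0 < c0 := hmono j (by omega)
  have hcr := hrange (j + 1) (by omega) (by omega)
  have hcn1 : c0 ≤ n - 1 := hcr.2
  have hc1 : 1 ≤ c0 := hcr.1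
  have hcn : c0 < n := by omega
  have hbn : b0 < n := by omega
  have han : a0 < n := by omega
  obtain ⟨e, he⟩ := exists_adapted_basis E hD F hflag hdim
  set a' : Fin n := ⟨a0, han⟩ with ha'
  set b' : Fin n := ⟨b0, hbn⟩ with hb'
  set c' : Fin n := ⟨c0, hcn⟩ with hc'
  have ha'v : a'.val = a0 := rfl
  have hb'v : b'.val = b0 := rfl
  have hc'v : c'.val = c0 := rfl
  have hFspan : ∀ (x0 : ℕ) (x' : Fin n), x'.val = x0 → x0 ≤ n →
      F x0 = Submodule.span E ((fun i : Fin n => e i) '' ↑(Finset.Ici x')) := by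
    intro x0 x' hx hxn
    rw [he x0 hxn]
    have hset : {i : Fin n | x0 ≤ i.val} = ↑(Finset.Ici x') := by
      ext i
      simp [Finset.mem_Ici, Fin.le_def, hx]
    rw [hset]
  have hFmap : ∀ (x0 : ℕ) (x' : Fin n), x'.val = x0 → x0 ≤ n →
      Submodule.map (ExteriorAlgebra.ι E) (F x0)
        = Submodule.span E ((fun i : Fin n => ExteriorAlgebra.ι E (e i)) '' ↑(Finset.Ici x')) := by
    intro x0 x' hx hxn
    rw [hFspan x0 x' hx hxn, Submodule.map_span, Set.image_image]
  have heF : ∀ (x0 : ℕ) (i : Fin n), x0 ≤ n → x0 ≤ i.val → e i ∈ F x0 := by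
    intro x0 i hxn hxi
    rw [he x0 hxn]
    exact Submodule.subset_span ⟨i, hxi, rfl⟩
  set U : Finset (Fin n) := Finset.Ici b' with hU
  set 𝒯 : Finset (Finset (Fin n)) :=
    insert U (((Finset.Ico b' c') ×ˢ (Finset.Ico a' b')).image
      (fun pq => insert pq.2 (U.erase pq.1))) with h𝒯
  set W : Finset (ExteriorAlgebra E D) := 𝒯.image (fun S => ws E (fun i => e i) S) with hW
  set P : Submodule E (ExteriorAlgebra E D) :=
    (Submodule.map (ExteriorAlgebra.ι E) (F c0)) ^ (n - c0) *
      (Submodule.map (ExteriorAlgebra.ι E) (F b0)) ^ (c0 - b0 - 1) *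
      (Submodule.map (ExteriorAlgebra.ι E) (F a0)) with hP
  have hUcard : U.card = n - b0 := by rw [hU, Fin.card_Ici, hb'v]
  have hIcic : (Finset.Ici c').card = n - c0 := by rw [Fin.card_Ici, hc'v]
  have hIcobc : (Finset.Ico b' c').card = c0 - b0 := by rw [Fin.card_Ico, hb'v, hc'v]
  have hIcoab : (Finset.Ico a' b').card = b0 - a0 := by rw [Fin.card_Ico, ha'v, hb'v]
  have hTcard : ∀ T ∈ 𝒯, T.card = n - b0 := by
    intro T hT
    rw [h𝒯, Finset.mem_insert] at hT
    rcases hT with rfl | hT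
    · exact hUcard
    · obtain ⟨⟨t, s⟩, hts, rfl⟩ := Finset.mem_image.mp hT
      rw [Finset.mem_product, Finset.mem_Ico, Finset.mem_Ico] at hts
      have hsb : s.val < b0 := by
        have := hts.2.2; rw [Fin.lt_def, hb'v] at this; exact this
      have htb : b0 ≤ t.val := by
        have := hts.1.1; rw [Fin.le_def, hb'v] at this; exact this
      have hsU : s ∉ U.erase t := by
        intro hs
        have := Finset.mem_of_mem_erase hs
        rw [hU, Finset.mem_Ici, Fin.le_def, hb'v] at this
        omega
      have htU : t ∈ U := by
        rw [hU, Finset.mem_Ici, Fin.le_def, hb'v]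
        exact htb
      rw [Finset.card_insert_of_notMem hsU, Finset.card_erase_of_mem htU, hUcard]
      omega
  -- `key` : wedges indexed by our combinatorial family lie in `P`
  have key : ∀ t s : Fin n, b0 ≤ t.val → t.val < c0 → a0 ≤ s.val →
      (s.val < b0 ∨ s = t) → ws E (fun i => e i) (insert s (U.erase t)) ∈ P := by
    intro t s htb htc hsa hscase
    have hscase' : s.val < b0 ∨ s.val = t.val := by
      rcases hscase with h | h
      · exact Or.inl h
      · exact Or.inr (by rw [h])
    have hsc : s.val < c0 := by omega
    set l1 : List (Fin n) := (Finset.Ici c').sort (· ≤ ·) with hl1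
    set l2 : List (Fin n) := ((Finset.Ico b' c').erase t).sort (· ≤ ·) with hl2
    set L : List (Fin n) := l1 ++ (l2 ++ [s]) with hLdef
    have hl1mem : ∀ i ∈ l1, c0 ≤ i.val := by
      intro i hi
      rw [hl1, Finset.mem_sort, Finset.mem_Ici, Fin.le_def, hc'v] at hi
      exact hi
    have hl2mem : ∀ i ∈ l2, b0 ≤ i.val ∧ i.val < c0 ∧ i ≠ t := by
      intro i hi
      rw [hl2, Finset.mem_sort, Finset.mem_erase, Finset.mem_Ico, Fin.le_def, Fin.lt_def,
        hb'v, hc'v] at hi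
      exact ⟨hi.2.1, hi.2.2, hi.1⟩
    have hLnodup : L.Nodup := by
      rw [hLdef, List.nodup_append, List.nodup_append]
      refine ⟨Finset.sort_nodup _ _, ⟨Finset.sort_nodup _ _, List.nodup_singleton s, ?_⟩, ?_⟩
      · intro x hx y hxs hxy
        subst hxy
        rw [List.mem_singleton] at hxs
        subst hxs
        have hx' := hl2mem x hx
        rcases hscase with h | h
        · omega
        · exact hx'.2.2 h
      · intro x hx y hx2 hxy
        subst hxy
        have hxc := hl1mem x hx
        rw [List.mem_append, List.mem_singleton] at hx2
        rcases hx2 with h | rfl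
        · have := (hl2mem x h).2.1; omega
        · omega
    have hLfin : L.toFinset = insert s (U.erase t) := by
      rw [hLdef]
      simp only [List.toFinset_append, List.toFinset_cons, List.toFinset_nil, hl1, hl2,
        Finset.sort_toFinset]
      ext i
      simp only [Finset.mem_union, Finset.mem_insert, Finset.mem_erase, Finset.mem_Ici,
        Finset.mem_Ico, Finset.mem_singleton, hU, Fin.le_def, Fin.lt_def, Fin.ext_iff,
        insert_empty_eq, ne_eq]
      omega
    have hlen1 : l1.length = n - c0 := by rw [hl1, Finset.length_sort, hIcic]
    have htIco : t ∈ Finset.Ico b' c' := by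
      rw [Finset.mem_Ico, Fin.le_def, Fin.lt_def, hb'v, hc'v]
      exact ⟨htb, htc⟩
    have hlen2 : l2.length = c0 - b0 - 1 := by
      rw [hl2, Finset.length_sort, Finset.card_erase_of_mem htIco, hIcobc]
    have h1 : pl E (l1.map fun i => e i) ∈
        (Submodule.map (ExteriorAlgebra.ι E) (F c0)) ^ (n - c0) := by
      have hm := pl_mem_pow E (fun i => e i) (F c0) l1
        (fun i hi => heF c0 i hcn.le (hl1mem i hi))
      rwa [hlen1] at hm
    have h2 : pl E (l2.map fun i => e i) ∈
        (Submodule.map (ExteriorAlgebra.ι E) (F b0)) ^ (c0 - b0 - 1) := by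
      have hm := pl_mem_pow E (fun i => e i) (F b0) l2
        (fun i hi => heF b0 i hbn.le (hl2mem i hi).1)
      rwa [hlen2] at hm
    have h3 : ExteriorAlgebra.ι E (e s) ∈ Submodule.map (ExteriorAlgebra.ι E) (F a0) :=
      Submodule.mem_map.mpr ⟨e s, heF a0 s han.le hsa, rfl⟩
    have hmem : pl E (L.map fun i => e i) ∈ P := by
      rw [hLdef, List.map_append, List.map_append, pl_append, pl_append, hP, mul_assoc]
      refine Submodule.mul_mem_mul h1 (Submodule.mul_mem_mul h2 ?_)
      simpa using h3
    have hws := ws_toFinset_mem E (fun i => e i) hLnodup hmem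
    rwa [hLfin] at hws
  have hWP : ∀ w ∈ W, w ∈ P := by
    intro w hw
    rw [hW, Finset.mem_image] at hw
    obtain ⟨T, hT, rfl⟩ := hw
    rw [h𝒯, Finset.mem_insert] at hT
    rcases hT with rfl | hT
    · have hbU : b' ∈ U := by rw [hU, Finset.mem_Ici]
      have hUeq : U = insert b' (U.erase b') := (Finset.insert_erase hbU).symm
      rw [hUeq]
      exact key b' b' le_rfl hbc hab.le (Or.inr rfl)
    · obtain ⟨⟨t, s⟩, hts, rfl⟩ := Finset.mem_image.mp hT
      rw [Finset.mem_product, Finset.mem_Ico, Finset.mem_Ico] at hts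
      exact key t s hts.1.1 hts.1.2 hts.2.1 (Or.inl hts.2.2)
  have hPle : P ≤ Submodule.span E (↑W : Set (ExteriorAlgebra E D)) := by
    rw [hP, hFmap c0 c' rfl hcn.le, hFmap b0 b' rfl hbn.le, hFmap a0 a' rfl han.le,
      Submodule.span_pow, Submodule.span_pow, Submodule.span_mul_span, Submodule.span_mul_span,
      Submodule.span_le]
    rintro x hx
    rw [Set.mem_mul] at hx
    obtain ⟨y, hy, z, hz, rfl⟩ := hx
    rw [Set.mem_mul] at hy
    obtain ⟨y1, hy1, y2, hy2, rfl⟩ := hy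
    obtain ⟨l1, hlen1, hmem1, rfl⟩ := mem_set_pow_image E (fun i => e i) _ hy1
    obtain ⟨l2, hlen2, hmem2, rfl⟩ := mem_set_pow_image E (fun i => e i) _ hy2
    obtain ⟨s, hs, rfl⟩ := hz
    set L : List (Fin n) := l1 ++ (l2 ++ [s]) with hLdef
    have hxL : pl E (l1.map fun i => e i) * pl E (l2.map fun i => e i) *
        ExteriorAlgebra.ι E (e s) = pl E (L.map fun i => e i) := by
      rw [hLdef, List.map_append, List.map_append, pl_append, pl_append]
      simp [mul_assoc]
    rw [SetLike.mem_coe, hxL]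
    by_cases hnd : L.Nodup
    · -- nodup case: identify the finset
      have hnd' := hnd
      rw [hLdef, List.nodup_append, List.nodup_append] at hnd'
      obtain ⟨hnd1, ⟨hnd2, -, hdisj2⟩, hdisj1⟩ := hnd'
      have hsnl1 : s ∉ l1 := fun h => hdisj1 s h s (by simp) rfl
      have hsnl2 : s ∉ l2 := fun h => hdisj2 s h s (by simp) rfl
      have hdisj12 : ∀ i ∈ l1, i ∉ l2 := fun i hi h2 => hdisj1 i hi i (by simp [h2]) rfl
      have hmem1' : ∀ i ∈ l1, c0 ≤ i.val := by
        intro i hi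
        have h := Finset.mem_Ici.mp (Finset.mem_coe.mp (hmem1 i hi))
        rw [Fin.le_def, hc'v] at h
        exact h
      have hmem2' : ∀ i ∈ l2, b0 ≤ i.val := by
        intro i hi
        have h := Finset.mem_Ici.mp (Finset.mem_coe.mp (hmem2 i hi))
        rw [Fin.le_def, hb'v] at h
        exact h
      have hsa : a0 ≤ s.val := by
        have h := Finset.mem_Ici.mp (Finset.mem_coe.mp hs)
        rw [Fin.le_def, ha'v] at h
        exact h
      have hT1 : l1.toFinset = Finset.Ici c' := by
        apply Finset.eq_of_subset_of_card_le
        · intro i hi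
          rw [List.mem_toFinset] at hi
          rw [Finset.mem_Ici, Fin.le_def, hc'v]
          exact hmem1' i hi
        · rw [hIcic, List.toFinset_card_of_nodup hnd1, hlen1]
      have hT2sub : l2.toFinset ⊆ Finset.Ico b' c' := by
        intro i hi
        rw [List.mem_toFinset] at hi
        have hb := hmem2' i hi
        have hic : i.val < c0 := by
          by_contra hcon
          have : i ∈ Finset.Ici c' := by
            rw [Finset.mem_Ici, Fin.le_def, hc'v]; omega
          rw [← hT1, List.mem_toFinset] at this
          exact hdisj12 i this hi
        rw [Finset.mem_Ico, Fin.le_def, Fin.lt_def, hb'v, hc'v]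
        exact ⟨hb, hic⟩
      have hcard2 : l2.toFinset.card = c0 - b0 - 1 := by
        rw [List.toFinset_card_of_nodup hnd2, hlen2]
      have hex : ∃ t ∈ Finset.Ico b' c', t ∉ l2.toFinset := by
        rw [← Finset.not_subset]
        intro hcon
        have hle := Finset.card_le_card hcon
        rw [hIcobc, hcard2] at hle
        omega
      obtain ⟨t, htIco, htn2⟩ := hex
      have htb : b0 ≤ t.val := by
        have h := (Finset.mem_Ico.mp htIco).1; rw [Fin.le_def, hb'v] at h; exact h
      have htc : t.val < c0 := by
        have h := (Finset.mem_Ico.mp htIco).2; rw [Fin.lt_def, hc'v] at h; exact h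
      have hT2 : l2.toFinset = (Finset.Ico b' c').erase t := by
        apply Finset.eq_of_subset_of_card_le
        · exact Finset.subset_erase.mpr ⟨hT2sub, htn2⟩
        · rw [Finset.card_erase_of_mem htIco, hIcobc, hcard2]
      have hLfin : L.toFinset = l1.toFinset ∪ (l2.toFinset ∪ {s}) := by
        rw [hLdef]
        simp [List.toFinset_append]
      have hTin : L.toFinset ∈ 𝒯 := by
        by_cases hsb : s.val < b0
        · have hTeq : L.toFinset = insert s (U.erase t) := by
            rw [hLfin, hT1, hT2]
            ext i
            simp only [Finset.mem_union, Finset.mem_insert, Finset.mem_erase, Finset.mem_Ici,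
              Finset.mem_Ico, Finset.mem_singleton, hU, Fin.le_def, Fin.lt_def, Fin.ext_iff,
              ne_eq]
            omega
          rw [hTeq, h𝒯]
          refine Finset.mem_insert_of_mem (Finset.mem_image.mpr ⟨(t, s), ?_, rfl⟩)
          rw [Finset.mem_product]
          refine ⟨htIco, ?_⟩
          rw [Finset.mem_Ico, Fin.le_def, Fin.lt_def, ha'v, hb'v]
          exact ⟨hsa, hsb⟩
        · have hsb' : b0 ≤ s.val := by omega
          have hsc : s.val < c0 := by
            by_contra hcon
            apply hsnl1
            rw [← List.mem_toFinset, hT1, Finset.mem_Ici, Fin.le_def, hc'v]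
            omega
          have hst : s = t := by
            by_contra hne
            apply hsnl2
            rw [← List.mem_toFinset, hT2]
            refine Finset.mem_erase.mpr ⟨hne, ?_⟩
            rw [Finset.mem_Ico, Fin.le_def, Fin.lt_def, hb'v, hc'v]
            exact ⟨hsb', hsc⟩
          subst hst
          have hTeq : L.toFinset = U := by
            rw [hLfin, hT1, hT2]
            ext i
            simp only [Finset.mem_union, Finset.mem_insert, Finset.mem_erase, Finset.mem_Ici,
              Finset.mem_Ico, Finset.mem_singleton, hU, Fin.le_def, Fin.lt_def, Fin.ext_iff,
              ne_eq]
            omega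
          rw [hTeq, h𝒯]
          exact Finset.mem_insert_self _ _
      exact pl_mem_of_ws_mem E (fun i => e i) hnd
        (Submodule.subset_span (Finset.mem_coe.mpr (Finset.mem_image_of_mem _ hTin)))
    · have hmap : ¬ (L.map fun i => e i).Nodup := fun hm => hnd (hm.of_map _)
      rw [pl_eq_zero E hmap]
      exact Submodule.zero_mem _
  have hPW : P = Submodule.span E (↑W : Set (ExteriorAlgebra E D)) :=
    le_antisymm hPle (Submodule.span_le.mpr fun w hw => hWP w (Finset.mem_coe.mp hw))
  have hseteq : (fun S : {S : Finset (Fin n) // S.card = n - b0} => ws E (fun i => e i) S.1) ''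
      {S : {S : Finset (Fin n) // S.card = n - b0} | S.1 ∈ 𝒯}
      = (↑W : Set (ExteriorAlgebra E D)) := by
    ext x
    constructor
    · rintro ⟨S, hS, rfl⟩
      exact Finset.mem_coe.mpr (Finset.mem_image_of_mem _ hS)
    · intro hx
      obtain ⟨T, hT, rfl⟩ := Finset.mem_image.mp (Finset.mem_coe.mp hx)
      exact ⟨⟨T, hTcard T hT⟩, hT, rfl⟩
  have hindep : LinearIndependent E
      ((↑) : (↑W : Set (ExteriorAlgebra E D)) → ExteriorAlgebra E D) := by
    rw [← hseteq]
    have hres : LinearIndependent E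
        (fun x : {S : {S : Finset (Fin n) // S.card = n - b0} | S.1 ∈ 𝒯} =>
          ws E (fun i => e i) x.1.1) :=
      (ws_linearIndependent E e (n - b0)).comp _ Subtype.val_injective
    exact LinearIndepOn.id_image (v := fun S : {S : Finset (Fin n) // S.card = n - b0} => ws E (fun i => e i) S.1) hres
  have hfr := finrank_span_set_eq_card (s := (↑W : Set (ExteriorAlgebra E D))) hindep
  have hwsinj : Set.InjOn (fun S => ws E (fun i => e i) S) (↑𝒯 : Set (Finset (Fin n))) := by
    intro S hS T hT hws
    have hi := (ws_linearIndependent E e (n - b0)).injective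
      (a₁ := ⟨S, hTcard S (Finset.mem_coe.mp hS)⟩)
      (a₂ := ⟨T, hTcard T (Finset.mem_coe.mp hT)⟩) hws
    exact congrArg Subtype.val hi
  have hWcard : W.card = 𝒯.card := by
    rw [hW]
    exact Finset.card_image_of_injOn hwsinj
  have hUnotmem : U ∉ ((Finset.Ico b' c') ×ˢ (Finset.Ico a' b')).image
      (fun pq => insert pq.2 (U.erase pq.1)) := by
    intro hmem
    obtain ⟨⟨t, s⟩, hts, heq⟩ := Finset.mem_image.mp hmem
    rw [Finset.mem_product] at hts
    have hsU : s ∈ U := by rw [← heq]; exact Finset.mem_insert_self _ _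
    have h1 : b0 ≤ s.val := by
      rw [hU, Finset.mem_Ici, Fin.le_def, hb'v] at hsU; exact hsU
    have h2 : s.val < b0 := by
      have := (Finset.mem_Ico.mp hts.2).2; rw [Fin.lt_def, hb'v] at this; exact this
    omega
  have hprodinj : Set.InjOn (fun pq : Fin n × Fin n => insert pq.2 (U.erase pq.1))
      ↑((Finset.Ico b' c') ×ˢ (Finset.Ico a' b')) := by
    rintro ⟨t1, s1⟩ h1 ⟨t2, s2⟩ h2 heq
    rw [Finset.mem_coe, Finset.mem_product] at h1 h2
    simp only at heq
    have hs1b : s1.val < b0 := by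
      have := (Finset.mem_Ico.mp h1.2).2; rw [Fin.lt_def, hb'v] at this; exact this
    have hs2b : s2.val < b0 := by
      have := (Finset.mem_Ico.mp h2.2).2; rw [Fin.lt_def, hb'v] at this; exact this
    have ht1b : b0 ≤ t1.val := by
      have := (Finset.mem_Ico.mp h1.1).1; rw [Fin.le_def, hb'v] at this; exact this
    have ht2b : b0 ≤ t2.val := by
      have := (Finset.mem_Ico.mp h2.1).1; rw [Fin.le_def, hb'v] at this; exact this
    have ht1U : t1 ∈ U := by
      rw [hU, Finset.mem_Ici, Fin.le_def, hb'v]; exact ht1b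
    have ht2U : t2 ∈ U := by
      rw [hU, Finset.mem_Ici, Fin.le_def, hb'v]; exact ht2b
    have hss : s1 = s2 := by
      have hs1mem : s1 ∈ insert s2 (U.erase t2) := by
        rw [← heq]; exact Finset.mem_insert_self _ _
      rcases Finset.mem_insert.mp hs1mem with h | h
      · exact h
      · exfalso
        have := Finset.mem_of_mem_erase h
        rw [hU, Finset.mem_Ici, Fin.le_def, hb'v] at this
        omega
    have htt : t1 = t2 := by
      by_contra hne
      have ht1mem : t1 ∈ insert s1 (U.erase t1) := by
        rw [heq]
        refine Finset.mem_insert_of_mem (Finset.mem_erase.mpr ⟨?_, ht1U⟩)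
        intro hcon
        rw [hcon] at hne
        exact hne rfl
      rcases Finset.mem_insert.mp ht1mem with h | h
      · rw [h] at ht1b; omega
      · exact (Finset.notMem_erase t1 U) h
    rw [hss, htt]
  have h𝒯card : 𝒯.card = (c0 - b0) * (b0 - a0) + 1 := by
    rw [h𝒯, Finset.card_insert_of_notMem hUnotmem, Finset.card_image_of_injOn hprodinj,
      Finset.card_product, hIcobc, hIcoab]
  rw [hPW, hfr, Finset.toFinset_coe, hWcard, h𝒯card]
  have hcomm : (c0 - b0) * (b0 - a0) = (b0 - a0) * (c0 - b0) := Nat.mul_comm _ _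
  omega
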